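/- Let ψ₁ = (φ₁, υ₁) and ψ₂ = (φ₂, υ₂) be solution pairs to a hybrid system H = (C, f, D, g) with ψ₁ compact, and suppose that (φ₂(0,0), υ₂(0,0)) ∈ C whenever both I_{ψ₁}^J := {t : (t,J) ∈ dom ψ₁} and I_{ψ₂}^0 := {t : (t,0) ∈ dom ψ₂} have nonempty interior, where (T,J) = max dom ψ₁. Then the concatenation ψ = (φ, υ) = ψ₁|ψ₂ satisfies: for each j ∈ ℕ such that I^j_ψ := {t : (t,j) ∈ dom ψ} has nonempty interior, (φ(t,j), υ(t,j)) ∈ C for all t in the interior of I^j_ψ. -/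

import Mathlib

open MeasureTheory Set

noncomputable section

/-- State/input space: `ℝ^k` with the Euclidean norm. -/
abbrev Vec (k : ℕ) : Type := EuclideanSpace ℝ (Fin k)

/-- A set `E ⊆ ℝ × ℕ` is a compact hybrid time domain if
`E = ⋃_{j=0}^{J} ([t_j, t_{j+1}] × {j})` for some `J ∈ ℕ` and a finite nondecreasing
sequence `0 = t_0 ≤ t_1 ≤ ... ≤ t_{J+1}`. -/
def IsCompactHTD (E : Set (ℝ × ℕ)) : Prop :=
  ∃ (J : ℕ) (t : ℕ → ℝ), t 0 = 0 ∧ (∀ i, i ≤ J → t i ≤ t (i + 1)) ∧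
    E = ⋃ j ∈ Finset.range (J + 1), Set.Icc (t j) (t (j + 1)) ×ˢ ({j} : Set ℕ)

/-- A hybrid time domain is the union of a nondecreasing sequence of compact
hybrid time domains. -/
def IsHTD (E : Set (ℝ × ℕ)) : Prop :=
  ∃ F : ℕ → Set (ℝ × ℕ), (∀ k, IsCompactHTD (F k)) ∧ Monotone F ∧ E = ⋃ k, F k

/-- The time slice `I^j = {t : (t,j) ∈ E}`. -/
def Slice (E : Set (ℝ × ℕ)) (j : ℕ) : Set ℝ := {t | (t, j) ∈ E}

/-- `(T,J) = max E` for a (compact) hybrid time domain `E`. -/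
def IsMaxOf (E : Set (ℝ × ℕ)) (T : ℝ) (J : ℕ) : Prop :=
  (T, J) ∈ E ∧ ∀ p ∈ E, p.1 ≤ T ∧ p.2 ≤ J

/-- `s` is Lebesgue measurable on `S`: preimages (within `S`) of open sets are
Lebesgue measurable subsets of `ℝ`. -/
def LebesgueMeasurableOn {k : ℕ} (s : ℝ → Vec k) (S : Set ℝ) : Prop :=
  ∀ U : Set (Vec k), IsOpen U → NullMeasurableSet {t | t ∈ S ∧ s t ∈ U} volume

/-- `s` is locally essentially bounded on `S`. -/
def LocallyEssBddOn {k : ℕ} (s : ℝ → Vec k) (S : Set ℝ) : Prop :=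
  ∀ r ∈ S, ∃ U : Set ℝ, IsOpen U ∧ r ∈ U ∧ ∃ c : ℝ, 0 ≤ c ∧
    ∀ᵐ t ∂(volume.restrict (U ∩ S)), ‖s t‖ ≤ c

/-- `s` is absolutely continuous on `[a,b]`: for each `ε > 0` there is `δ > 0` such
that every countable collection of disjoint subintervals of `[a,b]` of total length
at most `δ` has total variation of `s` at most `ε`. -/
def AbsContOn {k : ℕ} (s : ℝ → Vec k) (a b : ℝ) : Prop :=
  ∀ ε : ℝ, 0 < ε → ∃ δ : ℝ, 0 < δ ∧ ∀ I : ℕ → ℝ × ℝ,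
    (∀ i, a ≤ (I i).1 ∧ (I i).1 ≤ (I i).2 ∧ (I i).2 ≤ b) →
    (∀ i i', i ≠ i' → Disjoint (Set.Ioo (I i).1 (I i).2) (Set.Ioo (I i').1 (I i').2)) →
    (∑' i, ((I i).2 - (I i).1)) ≤ δ →
    (∑' i, ‖s (I i).2 - s (I i).1‖) ≤ ε

/-- `s` is locally absolutely continuous on `S`: absolutely continuous on every
compact subinterval of `S`. -/
def LocAbsContOn {k : ℕ} (s : ℝ → Vec k) (S : Set ℝ) : Prop :=
  ∀ a b : ℝ, a ≤ b → Set.Icc a b ⊆ S → AbsContOn s a b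

/-- `s` is locally bounded on `S`. -/
def LocallyBoundedOn {k : ℕ} (s : ℝ → Vec k) (S : Set ℝ) : Prop :=
  ∀ t₀ ∈ S, ∃ A ∈ nhds t₀, ∃ M : ℝ, 0 < M ∧ ∀ t ∈ A ∩ S, ‖s t‖ ≤ M

/-- A hybrid input: a function on a hybrid time domain `E` that is Lebesgue measurable
and locally essentially bounded on each time slice. -/
def IsHybridInput {m : ℕ} (υ : ℝ → ℕ → Vec m) (E : Set (ℝ × ℕ)) : Prop :=
  IsHTD E ∧ ∀ j : ℕ,
    LebesgueMeasurableOn (fun t => υ t j) (Slice E j) ∧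
    LocallyEssBddOn (fun t => υ t j) (Slice E j)

/-- A hybrid arc: a function on a hybrid time domain `E` that is locally absolutely
continuous on each time slice. -/
def IsHybridArc {n : ℕ} (φ : ℝ → ℕ → Vec n) (E : Set (ℝ × ℕ)) : Prop :=
  IsHTD E ∧ ∀ j : ℕ, LocAbsContOn (fun t => φ t j) (Slice E j)

/-- A hybrid system `H = (C, f, D, g)`. -/
structure HybridSystem (n m : ℕ) where
  C : Set (Vec n × Vec m)
  f : Vec n × Vec m → Vec n
  D : Set (Vec n × Vec m)
  g : Vec n × Vec m → Vec n

/-- `(φ, υ)` with common domain `E` is a solution pair to `H`. -/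
def IsSolutionPair {n m : ℕ} (H : HybridSystem n m)
    (φ : ℝ → ℕ → Vec n) (υ : ℝ → ℕ → Vec m) (E : Set (ℝ × ℕ)) : Prop :=
  IsHybridArc φ E ∧ IsHybridInput υ E ∧
  (φ 0 0, υ 0 0) ∈ closure H.C ∪ H.D ∧
  (∀ j : ℕ, (interior (Slice E j)).Nonempty →
    (∀ t ∈ interior (Slice E j), (φ t j, υ t j) ∈ H.C) ∧
    (∀ᵐ t ∂(volume.restrict (Slice E j)),
      HasDerivWithinAt (fun s => φ s j) (H.f (φ t j, υ t j)) (Slice E j) t)) ∧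
  (∀ p : ℝ × ℕ, p ∈ E → (p.1, p.2 + 1) ∈ E →
    (φ p.1 p.2, υ p.1 p.2) ∈ H.D ∧ φ p.1 (p.2 + 1) = H.g (φ p.1 p.2, υ p.1 p.2))

/-- Backward-in-time jump map `g^bw(x,u) = {z : x = g(z,u), (z,u) ∈ D}`. -/
def gbw {n m : ℕ} (H : HybridSystem n m) (x : Vec n) (u : Vec m) : Set (Vec n) :=
  {z | x = H.g (z, u) ∧ (z, u) ∈ H.D}

/-- Backward-in-time jump set `D^bw`. -/
def Dbw {n m : ℕ} (H : HybridSystem n m) : Set (Vec n × Vec m) :=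
  {p | ∃ z : Vec n, p.1 = H.g (z, p.2) ∧ (z, p.2) ∈ H.D}

/-- `(φ, υ)` with common domain `E` is a solution pair to the backward-in-time
system `H^bw = (C, -f, D^bw, g^bw)` of `H` (the jump inclusion is set-valued). -/
def IsBwSolutionPair {n m : ℕ} (H : HybridSystem n m)
    (φ : ℝ → ℕ → Vec n) (υ : ℝ → ℕ → Vec m) (E : Set (ℝ × ℕ)) : Prop :=
  IsHybridArc φ E ∧ IsHybridInput υ E ∧
  (φ 0 0, υ 0 0) ∈ closure H.C ∪ Dbw H ∧
  (∀ j : ℕ, (interior (Slice E j)).Nonempty →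
    (∀ t ∈ interior (Slice E j), (φ t j, υ t j) ∈ H.C) ∧
    (∀ᵐ t ∂(volume.restrict (Slice E j)),
      HasDerivWithinAt (fun s => φ s j) (-(H.f (φ t j, υ t j))) (Slice E j) t)) ∧
  (∀ p : ℝ × ℕ, p ∈ E → (p.1, p.2 + 1) ∈ E →
    (φ p.1 p.2, υ p.1 p.2) ∈ Dbw H ∧ φ p.1 (p.2 + 1) ∈ gbw H (φ p.1 p.2) (υ p.1 p.2))

/-- Minkowski sum `E + {(T,J)}`. -/
def Shift (E : Set (ℝ × ℕ)) (T : ℝ) (J : ℕ) : Set (ℝ × ℕ) :=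
  {p | ∃ q ∈ E, p = (q.1 + T, q.2 + J)}

/-- `ψ` with domain `E` is the concatenation `ψ₁|ψ₂`, where `(T,J) = max E₁`. -/
def IsConcat {α : Type*} (T : ℝ) (J : ℕ)
    (ψ₁ : ℝ → ℕ → α) (E₁ : Set (ℝ × ℕ))
    (ψ₂ : ℝ → ℕ → α) (E₂ : Set (ℝ × ℕ))
    (ψ : ℝ → ℕ → α) (E : Set (ℝ × ℕ)) : Prop :=
  E = E₁ ∪ Shift E₂ T J ∧
  (∀ p ∈ E₁, p ≠ (T, J) → ψ p.1 p.2 = ψ₁ p.1 p.2) ∧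
  (∀ p ∈ Shift E₂ T J, ψ p.1 p.2 = ψ₂ (p.1 - T) (p.2 - J))

/-- Minkowski difference `{(T,J)} − E`. -/
def RevDom (E : Set (ℝ × ℕ)) (T : ℝ) (J : ℕ) : Set (ℝ × ℕ) :=
  {p | ∃ q ∈ E, p = (T - q.1, J - q.2)}

/-- `(φ', υ')` with domain `E'` is the reversal of the compact pair `(φ, υ)` with
domain `E` and `(T,J) = max E`; `C` is the flow set used in the closure condition
on `υ'(0,0)`. -/
def IsReversal {n m : ℕ} (C : Set (Vec n × Vec m)) (T : ℝ) (J : ℕ)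
    (φ : ℝ → ℕ → Vec n) (υ : ℝ → ℕ → Vec m) (E : Set (ℝ × ℕ))
    (φ' : ℝ → ℕ → Vec n) (υ' : ℝ → ℕ → Vec m) (E' : Set (ℝ × ℕ)) : Prop :=
  E' = RevDom E T J ∧
  (∀ p ∈ E', φ' p.1 p.2 = φ (T - p.1) (J - p.2)) ∧
  (∀ j : ℕ, ∀ t ∈ interior (Slice E' j), υ' t j = υ (T - t) (J - j)) ∧
  ((interior (Slice E' 0)).Nonempty → (φ' 0 0, υ' 0 0) ∈ closure C) ∧
  (∀ p : ℝ × ℕ, p ∈ E' → (p.1, p.2 + 1) ∈ E' → υ' p.1 p.2 = υ (T - p.1) (J - (p.2 + 1)))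

/-- Lipschitz flow assumption with constants `Kx, Ku`. -/
def LipschitzFlow {n m : ℕ} (H : HybridSystem n m) (Kx Ku : ℝ) : Prop :=
  0 < Kx ∧ 0 < Ku ∧
  ∀ (x₀ x₁ : Vec n) (u₀ u₁ : Vec m),
    (x₀, u₀) ∈ H.C → (x₁, u₀) ∈ H.C → (x₀, u₁) ∈ H.C →
    ‖H.f (x₀, u₀) - H.f (x₁, u₀)‖ ≤ Kx * ‖x₀ - x₁‖ ∧
    ‖H.f (x₀, u₀) - H.f (x₀, u₁)‖ ≤ Ku * ‖u₀ - u₁‖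

/-- Linearly bounded jump map assumption with constants `Kx, Ku`. -/
def LinearBoundedJump {n m : ℕ} (H : HybridSystem n m) (Kx Ku : ℝ) : Prop :=
  0 < Kx ∧ 0 < Ku ∧
  ∀ (x₀ x₁ : Vec n) (u₀ u₁ : Vec m), (x₀, u₀) ∈ H.D → (x₁, u₁) ∈ H.D →
    ‖H.g (x₀, u₀) - H.g (x₁, u₁)‖ ≤ Kx * ‖x₀ - x₁‖ + Ku * ‖u₀ - u₁‖

/-- `φ` with domain `F ⊆ E'` is a reconstructed solution with input `υ'` (defined on
`E'`) and initial condition `x0`: it starts at `x0`, flows according to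
`f(·, υ')` on each nondegenerate slice, and jumps according to `g(·, υ')`. -/
def IsReconSolution {n m : ℕ} (H : HybridSystem n m)
    (υ' : ℝ → ℕ → Vec m) (E' : Set (ℝ × ℕ)) (x0 : Vec n)
    (φ : ℝ → ℕ → Vec n) (F : Set (ℝ × ℕ)) : Prop :=
  F ⊆ E' ∧ (0, 0) ∈ F ∧ φ 0 0 = x0 ∧ IsHTD F ∧
  (∀ j : ℕ, LocAbsContOn (fun t => φ t j) (Slice F j)) ∧
  (∀ j : ℕ, (interior (Slice F j)).Nonempty →
    ∀ᵐ t ∂(volume.restrict (Slice F j)),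
      HasDerivWithinAt (fun s => φ s j) (H.f (φ t j, υ' t j)) (Slice F j) t) ∧
  (∀ p : ℝ × ℕ, p ∈ F → (p.1, p.2 + 1) ∈ F →
    φ p.1 (p.2 + 1) = H.g (φ p.1 p.2, υ' p.1 p.2))

/-- A maximal reconstructed solution: one admitting no proper extension. -/
def IsMaximalRecon {n m : ℕ} (H : HybridSystem n m)
    (υ' : ℝ → ℕ → Vec m) (E' : Set (ℝ × ℕ)) (x0 : Vec n)
    (φ : ℝ → ℕ → Vec n) (F : Set (ℝ × ℕ)) : Prop :=
  IsReconSolution H υ' E' x0 φ F ∧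
  ∀ (φ₂ : ℝ → ℕ → Vec n) (F₂ : Set (ℝ × ℕ)),
    IsReconSolution H υ' E' x0 φ₂ F₂ → F ⊆ F₂ →
    (∀ p ∈ F, φ₂ p.1 p.2 = φ p.1 p.2) → F₂ = F

lemma compactHTD_facts' {E : Set (ℝ × ℕ)} (h : IsCompactHTD E) :
    ((0:ℝ), (0:ℕ)) ∈ E ∧ ∀ p ∈ E, 0 ≤ p.1 := by
  obtain ⟨J, t, ht0, hmono, hE⟩ := h
  have htnn : ∀ i, i ≤ J + 1 → 0 ≤ t i := by
    intro i hi
    induction i with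
    | zero => exact le_of_eq ht0.symm
    | succ k ih =>
      exact (ih (by omega)).trans (hmono k (by omega))
  constructor
  · rw [hE]
    refine Set.mem_iUnion₂.mpr ⟨0, by simp, ⟨⟨ht0.le, ?_⟩, rfl⟩⟩
    rw [← ht0]; exact hmono 0 (Nat.zero_le J)
  · intro p hp
    rw [hE] at hp
    obtain ⟨j, hj, hpj⟩ := Set.mem_iUnion₂.mp hp
    have hj' := Finset.mem_range.mp hj
    exact (htnn j (by omega)).trans hpj.1.1

lemma htd_facts' {E : Set (ℝ × ℕ)} (h : IsHTD E) :
    ((0:ℝ), (0:ℕ)) ∈ E ∧ ∀ p ∈ E, 0 ≤ p.1 := by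
  obtain ⟨F, hFc, -, hEeq⟩ := h
  constructor
  · rw [hEeq]; exact Set.mem_iUnion.mpr ⟨0, (compactHTD_facts' (hFc 0)).1⟩
  · intro p hp
    rw [hEeq] at hp
    obtain ⟨k, hk⟩ := Set.mem_iUnion.mp hp
    exact (compactHTD_facts' (hFc k)).2 p hk

/-- Lemma 10: if `ψ₁` and `ψ₂` are solution pairs to `H`, `ψ₁` compact, and
`(φ₂(0,0), υ₂(0,0)) ∈ C` whenever `I^J_{ψ₁}` and `I^0_{ψ₂}` both have nonempty
interior, then the concatenation `ψ = (φ, υ) = ψ₁|ψ₂` satisfies the flow-set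
condition: for each `j` with `I^j_ψ` of nonempty interior, `(φ(t,j), υ(t,j)) ∈ C`
for all `t` in the interior of `I^j_ψ`. -/
theorem concat_flow_set_condition {n m : ℕ} (H : HybridSystem n m)
    (φ₁ : ℝ → ℕ → Vec n) (υ₁ : ℝ → ℕ → Vec m) (E₁ : Set (ℝ × ℕ))
    (φ₂ : ℝ → ℕ → Vec n) (υ₂ : ℝ → ℕ → Vec m) (E₂ : Set (ℝ × ℕ))
    (φ : ℝ → ℕ → Vec n) (υ : ℝ → ℕ → Vec m) (E : Set (ℝ × ℕ))
    (T : ℝ) (J : ℕ)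
    (h₁ : IsSolutionPair H φ₁ υ₁ E₁)
    (h₂ : IsSolutionPair H φ₂ υ₂ E₂)
    (hcpt : IsCompactHTD E₁)
    (hmax : IsMaxOf E₁ T J)
    (hC : (interior (Slice E₁ J)).Nonempty → (interior (Slice E₂ 0)).Nonempty →
      (φ₂ 0 0, υ₂ 0 0) ∈ H.C)
    (hφ : IsConcat T J φ₁ E₁ φ₂ E₂ φ E)
    (hυ : IsConcat T J υ₁ E₁ υ₂ E₂ υ E) :
    ∀ j : ℕ, (interior (Slice E j)).Nonempty →
      ∀ t ∈ interior (Slice E j), (φ t j, υ t j) ∈ H.C := by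
  obtain ⟨hEeq, hφ₁eq, hφ₂eq⟩ := hφ
  obtain ⟨-, hυ₁eq, hυ₂eq⟩ := hυ
  have hE₂zero : ((0:ℝ), (0:ℕ)) ∈ E₂ := (htd_facts' h₂.1.1).1
  have hE₂nonneg : ∀ p ∈ E₂, 0 ≤ p.1 := (htd_facts' h₂.1.1).2
  have hshift : ∀ (s : ℝ) (j : ℕ), (s, j) ∈ Shift E₂ T J ↔ J ≤ j ∧ (s - T, j - J) ∈ E₂ := by
    intro s j
    constructor
    · rintro ⟨q, hq, heq⟩
      have h1 : s = q.1 + T := congrArg Prod.fst heq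
      have h2 : j = q.2 + J := congrArg Prod.snd heq
      refine ⟨by omega, ?_⟩
      have hs : s - T = q.1 := by rw [h1]; ring
      have hj : j - J = q.2 := by omega
      rw [hs, hj]; exact hq
    · rintro ⟨hJ, hq⟩
      exact ⟨(s - T, j - J), hq, Prod.ext (by simp) (by simp; omega)⟩
  intro j hne t ht
  rcases Nat.lt_trichotomy j J with hj | hj | hj
  · -- j < J : slice is the slice of E₁
    have hslice : Slice E j = Slice E₁ j := by
      ext s
      simp only [Slice, hEeq, Set.mem_union, Set.mem_setOf_eq]
      constructor
      · rintro (h | h)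
        · exact h
        · exact absurd ((hshift s j).1 h).1 (by omega)
      · exact Or.inl
    rw [hslice] at ht
    have hmem' : t ∈ Slice E₁ j := interior_subset ht
    have hmem : (t, j) ∈ E₁ := hmem'
    have hφt : φ t j = φ₁ t j :=
      hφ₁eq (t, j) hmem (by simp [Prod.ext_iff]; omega)
    have hυt : υ t j = υ₁ t j :=
      hυ₁eq (t, j) hmem (by simp [Prod.ext_iff]; omega)
    rw [hφt, hυt]
    exact (h₁.2.2.2.1 j ⟨t, ht⟩).1 t ht
  · -- j = J
    subst hj
    have hA : ∀ s ∈ Slice E₁ j, s ≤ T := fun s hs => (hmax.2 (s, j) hs).1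
    have hB : ∀ s : ℝ, (s - T, (0:ℕ)) ∈ E₂ → T ≤ s := by
      intro s hs
      have := hE₂nonneg _ hs
      simp only at this
      linarith
    have hslice : Slice E j = Slice E₁ j ∪ {s | (s - T, 0) ∈ E₂} := by
      ext s
      simp only [Slice, hEeq, Set.mem_union, Set.mem_setOf_eq]
      constructor
      · rintro (h | h)
        · exact Or.inl h
        · refine Or.inr ?_
          have := ((hshift s j).1 h).2
          simpa using this
      · rintro (h | h)
        · exact Or.inl h
        · exact Or.inr ((hshift s j).2 ⟨le_refl j, by simpa using h⟩)
    obtain ⟨ε, hε, hball⟩ := Metric.isOpen_iff.mp isOpen_interior t ht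
    have hball' : Set.Ioo (t - ε) (t + ε) ⊆ Slice E j := by
      rw [← Real.ball_eq_Ioo]
      exact fun s hs => interior_subset (hball hs)
    rcases lt_trichotomy t T with htT | htT | htT
    · -- t < T : stay in E₁'s slice
      set ε' := min ε (T - t) with hε'def
      have hε' : 0 < ε' := lt_min hε (by linarith)
      have hle1 : ε' ≤ ε := min_le_left _ _
      have hle2 : ε' ≤ T - t := min_le_right _ _
      have hsub : Set.Ioo (t - ε') (t + ε') ⊆ Slice E₁ j := by
        intro s hs
        have hsE : s ∈ Slice E j := hball' ⟨by linarith [hs.1], by linarith [hs.2]⟩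
        have hsT : s < T := by linarith [hs.2]
        rw [hslice] at hsE
        rcases hsE with h | h
        · exact h
        · exact absurd (hB s h) (by linarith)
      have htA : t ∈ interior (Slice E₁ j) :=
        mem_interior.mpr ⟨Set.Ioo (t - ε') (t + ε'), hsub, isOpen_Ioo,
          ⟨by linarith, by linarith⟩⟩
      have hmem' : t ∈ Slice E₁ j := interior_subset htA
      have hmem : (t, j) ∈ E₁ := hmem'
      have hneq : (t, j) ≠ (T, j) := fun h => ne_of_lt htT (congrArg Prod.fst h)
      have hφt : φ t j = φ₁ t j := hφ₁eq (t, j) hmem hneq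
      have hυt : υ t j = υ₁ t j := hυ₁eq (t, j) hmem hneq
      rw [hφt, hυt]
      exact (h₁.2.2.2.1 j ⟨t, htA⟩).1 t htA
    · -- t = T : use hC
      subst htT
      have hIntA : (interior (Slice E₁ j)).Nonempty := by
        refine ⟨t - ε / 2, ?_⟩
        have hsub : Set.Ioo (t - ε) t ⊆ Slice E₁ j := by
          intro s hs
          have hsE : s ∈ Slice E j := hball' ⟨hs.1, by linarith [hs.2]⟩
          rw [hslice] at hsE
          rcases hsE with h | h
          · exact h
          · exact absurd (hB s h) (by linarith [hs.2])
        exact interior_maximal hsub isOpen_Ioo ⟨by linarith, by linarith⟩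
      have hIntB : (interior (Slice E₂ 0)).Nonempty := by
        refine ⟨ε / 2, ?_⟩
        have hsub : Set.Ioo (0 : ℝ) ε ⊆ Slice E₂ 0 := by
          intro s hs
          have hsE : s + t ∈ Slice E j := hball' ⟨by linarith [hs.1], by linarith [hs.2]⟩
          rw [hslice] at hsE
          rcases hsE with h | h
          · exact absurd (hA _ h) (by linarith [hs.1])
          · show (s, (0:ℕ)) ∈ E₂
            have h2 : (s + t - t, (0 : ℕ)) ∈ E₂ := h
            simpa using h2
        exact interior_maximal hsub isOpen_Ioo ⟨by linarith, by linarith⟩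
      have hmemS : (t, j) ∈ Shift E₂ t j :=
        (hshift t j).2 ⟨le_refl j, by simpa using hE₂zero⟩
      have hφt : φ t j = φ₂ 0 0 := by
        have := hφ₂eq (t, j) hmemS
        simpa using this
      have hυt : υ t j = υ₂ 0 0 := by
        have := hυ₂eq (t, j) hmemS
        simpa using this
      rw [hφt, hυt]
      exact hC hIntA hIntB
    · -- t > T : stay in E₂'s slice 0
      set ε' := min ε (t - T) with hε'def
      have hε' : 0 < ε' := lt_min hε (by linarith)
      have hle1 : ε' ≤ ε := min_le_left _ _
      have hle2 : ε' ≤ t - T := min_le_right _ _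
      have hsub : Set.Ioo (t - T - ε') (t - T + ε') ⊆ Slice E₂ 0 := by
        intro s hs
        have hsE : s + T ∈ Slice E j :=
          hball' ⟨by linarith [hs.1], by linarith [hs.2]⟩
        have hsT : T < s + T := by linarith [hs.1]
        rw [hslice] at hsE
        rcases hsE with h | h
        · exact absurd (hA _ h) (by linarith)
        · show (s, (0:ℕ)) ∈ E₂
          have h2 : (s + T - T, (0 : ℕ)) ∈ E₂ := h
          simpa using h2
      have htB : t - T ∈ interior (Slice E₂ 0) :=
        mem_interior.mpr ⟨_, hsub, isOpen_Ioo, ⟨by linarith, by linarith⟩⟩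
      have hmem' : t - T ∈ Slice E₂ 0 := interior_subset htB
      have hmemS : (t, j) ∈ Shift E₂ T j :=
        (hshift t j).2 ⟨le_refl j, by simpa [Slice] using hmem'⟩
      have hφt : φ t j = φ₂ (t - T) 0 := by
        have := hφ₂eq (t, j) hmemS
        simpa using this
      have hυt : υ t j = υ₂ (t - T) 0 := by
        have := hυ₂eq (t, j) hmemS
        simpa using this
      rw [hφt, hυt]
      exact (h₂.2.2.2.1 0 ⟨t - T, htB⟩).1 (t - T) htB
  · -- j > J : slice is a translate of E₂'s slice
    have hslice : Slice E j = (fun s => s - T) ⁻¹' (Slice E₂ (j - J)) := by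
      ext s
      simp only [Slice, hEeq, Set.mem_union, Set.mem_setOf_eq, Set.mem_preimage]
      constructor
      · rintro (h | h)
        · exact absurd (hmax.2 _ h).2 (by omega)
        · exact ((hshift s j).1 h).2
      · intro h
        exact Or.inr ((hshift s j).2 ⟨by omega, h⟩)
    have ht2 : t - T ∈ interior (Slice E₂ (j - J)) := by
      have heq : (fun s : ℝ => s - T) = (Homeomorph.subRight T) := rfl
      rw [hslice, heq, ← Homeomorph.preimage_interior] at ht
      exact ht
    have hmem' : t - T ∈ Slice E₂ (j - J) := interior_subset ht2
    have hmemS : (t, j) ∈ Shift E₂ T J :=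
      (hshift t j).2 ⟨le_of_lt hj, hmem'⟩
    have hφt : φ t j = φ₂ (t - T) (j - J) := hφ₂eq (t, j) hmemS
    have hυt : υ t j = υ₂ (t - T) (j - J) := hυ₂eq (t, j) hmemS
    rw [hφt, hυt]
    exact (h₂.2.2.2.1 (j - J) ⟨t - T, ht2⟩).1 (t - T) ht2
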